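/- Fix n ≥ 2 and parameters β_i > 0, ν_i ∈ (0,1) and ρ_i ∈ (0,1) for i = 1,…,n, and set D = n·Π_{j=1}^n ν_j − Σ_{j=1}^n Π_{k≠j} ν_k (which is nonzero). Define x̄ = ( Σ_i ρ_i(ν_i−1)·Π_{j≠i} ν_j ) / D, and for each i, ȳ_i = 1/n + [ ρ_i(ν_i−1)·( (1−n)·Σ_{j≠i} Π_{k≠i,j} ν_k + n(n−2)·Π_{j≠i} ν_j ) − (1−n+nν_i)·Σ_{j≠i}( ρ_j(ν_j−1)·Π_{k≠i,j} ν_k ) ] / (n·D). Then (x̄, ȳ_1, …, ȳ_n) is an equilibrium of the well-mixed consumption system; in particular x̄ + Σ_{i=1}^n ȳ_i = 1 and all components of the vector field vanish at this point. -/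

import Mathlib

/-- Equilibrium condition for the well-mixed consumption system:
`ẋ = (1−x)x − x·Σᵢ yᵢ`,
`ẏᵢ = βᵢ((1−νᵢ)(x−ρᵢ) + νᵢ((1/(n−1))·Σ_{j≠i} yⱼ − yᵢ))`. -/
def WellMixedEq (n : ℕ) (β ν ρ : Fin n → ℝ) (x : ℝ) (y : Fin n → ℝ) : Prop :=
  ((1 - x) * x - x * ∑ i, y i = 0) ∧
  ∀ i : Fin n,
    β i * ((1 - ν i) * (x - ρ i)
      + ν i * ((1 / ((n : ℝ) - 1)) * (∑ j ∈ Finset.univ.erase i, y j) - y i)) = 0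

/-- Double-sum swap over off-diagonal pairs. -/
lemma aux_swap {n : ℕ} (g : Fin n → Fin n → ℝ) :
    ∑ i, ∑ j ∈ Finset.univ.erase i, g i j = ∑ j, ∑ i ∈ Finset.univ.erase j, g i j := by
  rw [Finset.sum_comm' (t' := Finset.univ) (s' := fun j => Finset.univ.erase j)]
  intro i j
  simp [eq_comm, and_comm]

/-- Explicit formula for the equilibrium of the well-mixed consumption system with
`νᵢ ∈ (0,1)` and `ρᵢ ∈ (0,1)`: the denominator `D` is nonzero, the displayed point is
an equilibrium, and it satisfies `x̄ + Σᵢ ȳᵢ = 1`. -/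
theorem well_mixed_equilibrium_formula (n : ℕ) (hn : 2 ≤ n)
    (β ν ρ : Fin n → ℝ) (hβ : ∀ i, 0 < β i)
    (hν : ∀ i, ν i ∈ Set.Ioo (0:ℝ) 1) (hρ : ∀ i, ρ i ∈ Set.Ioo (0:ℝ) 1)
    (D : ℝ)
    (hD : D = (n : ℝ) * ∏ j, ν j - ∑ j, ∏ k ∈ Finset.univ.erase j, ν k)
    (xbar : ℝ)
    (hx : xbar = (∑ i, ρ i * (ν i - 1) * ∏ j ∈ Finset.univ.erase i, ν j) / D)
    (ybar : Fin n → ℝ)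
    (hy : ∀ i, ybar i = 1 / (n : ℝ) +
      (ρ i * (ν i - 1) *
          ((1 - (n : ℝ)) *
              (∑ j ∈ Finset.univ.erase i, ∏ k ∈ (Finset.univ.erase i).erase j, ν k)
            + (n : ℝ) * ((n : ℝ) - 2) * ∏ j ∈ Finset.univ.erase i, ν j)
        - (1 - (n : ℝ) + (n : ℝ) * ν i) *
            ∑ j ∈ Finset.univ.erase i,
              ρ j * (ν j - 1) * ∏ k ∈ (Finset.univ.erase i).erase j, ν k)
      / ((n : ℝ) * D)) :
    D ≠ 0 ∧ WellMixedEq n β ν ρ xbar ybar ∧ xbar + ∑ i, ybar i = 1 := by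
  have hn2 : (2:ℝ) ≤ (n:ℝ) := by exact_mod_cast hn
  have hn0 : (n:ℝ) ≠ 0 := by linarith
  have hn1 : (n:ℝ) - 1 ≠ 0 := by linarith
  have hne : Nonempty (Fin n) := ⟨⟨0, by omega⟩⟩
  have hν0 : ∀ i, 0 < ν i := fun i => (hν i).1
  have hν1 : ∀ i, ν i < 1 := fun i => (hν i).2
  have hPpos : ∀ i : Fin n, 0 < ∏ j ∈ Finset.univ.erase i, ν j :=
    fun i => Finset.prod_pos fun j _ => hν0 j
  have hcard : ∀ i : Fin n, (((Finset.univ.erase i).card : ℕ) : ℝ) = (n:ℝ) - 1 := by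
    intro i
    rw [Finset.card_erase_of_mem (Finset.mem_univ i), Finset.card_univ, Fintype.card_fin,
      Nat.cast_sub (by omega)]
    norm_num
  -- D as a sum
  have hDeq : D = ∑ j, (ν j - 1) * ∏ k ∈ Finset.univ.erase j, ν k := by
    have h1 : (n:ℝ) * ∏ j, ν j = ∑ j : Fin n, ν j * ∏ k ∈ Finset.univ.erase j, ν k := by
      have h2 : ∀ j : Fin n, ν j * ∏ k ∈ Finset.univ.erase j, ν k = ∏ k, ν k :=
        fun j => Finset.mul_prod_erase _ _ (Finset.mem_univ j)
      rw [Finset.sum_congr rfl fun j _ => h2 j, Finset.sum_const, Finset.card_univ,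
        Fintype.card_fin, nsmul_eq_mul]
    rw [hD, h1, ← Finset.sum_sub_distrib]
    exact Finset.sum_congr rfl fun j _ => by ring
  have hDneg : D < 0 := by
    rw [hDeq]
    refine Finset.sum_neg (fun j _ => ?_) Finset.univ_nonempty
    nlinarith [hPpos j, hν1 j]
  have hDne : D ≠ 0 := ne_of_lt hDneg
  -- product relations
  have hPmul : ∀ i : Fin n, ∀ j ∈ Finset.univ.erase i,
      ν j * ∏ k ∈ (Finset.univ.erase i).erase j, ν k = ∏ k ∈ Finset.univ.erase i, ν k :=
    fun i j hj => Finset.mul_prod_erase _ _ hj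
  have hPmul' : ∀ i : Fin n, ∀ j ∈ Finset.univ.erase i,
      ν i * ∏ k ∈ (Finset.univ.erase i).erase j, ν k = ∏ k ∈ Finset.univ.erase j, ν k := by
    intro i j hj
    have hij : j ≠ i := Finset.ne_of_mem_erase hj
    rw [Finset.erase_right_comm]
    exact Finset.mul_prod_erase _ _
      (Finset.mem_erase.mpr ⟨hij.symm, Finset.mem_univ i⟩)
  -- A decomposition
  have hA : ∀ i : Fin n, (∑ k, ρ k * (ν k - 1) * ∏ l ∈ Finset.univ.erase k, ν l)
      = ρ i * (ν i - 1) * ∏ l ∈ Finset.univ.erase i, ν l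
        + ν i * ∑ j ∈ Finset.univ.erase i,
            ρ j * (ν j - 1) * ∏ k ∈ (Finset.univ.erase i).erase j, ν k := by
    intro i
    rw [← Finset.add_sum_erase _ _ (Finset.mem_univ i)]
    congr 1
    rw [Finset.mul_sum]
    refine Finset.sum_congr rfl fun j hj => ?_
    rw [← hPmul' i j hj]; ring
  -- D decomposition
  have hDi : ∀ i : Fin n, D = (ν i - 1) * ∏ k ∈ Finset.univ.erase i, ν k
      + ν i * (((n:ℝ) - 1) * ∏ k ∈ Finset.univ.erase i, ν k
        - ∑ j ∈ Finset.univ.erase i, ∏ k ∈ (Finset.univ.erase i).erase j, ν k) := by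
    intro i
    rw [hDeq, ← Finset.add_sum_erase _ _ (Finset.mem_univ i)]
    congr 1
    have step : ∀ j ∈ Finset.univ.erase i, (ν j - 1) * ∏ k ∈ Finset.univ.erase j, ν k
        = ν i * (∏ k ∈ Finset.univ.erase i, ν k
            - ∏ k ∈ (Finset.univ.erase i).erase j, ν k) := by
      intro j hj
      rw [← hPmul' i j hj, ← hPmul i j hj]; ring
    rw [Finset.sum_congr rfl step, ← Finset.mul_sum, Finset.sum_sub_distrib,
      Finset.sum_const, nsmul_eq_mul, hcard i]
  -- sum of the numerators
  have hNsum : ∑ i, (ρ i * (ν i - 1) *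
          ((1 - (n : ℝ)) *
              (∑ j ∈ Finset.univ.erase i, ∏ k ∈ (Finset.univ.erase i).erase j, ν k)
            + (n : ℝ) * ((n : ℝ) - 2) * ∏ j ∈ Finset.univ.erase i, ν j)
        - (1 - (n : ℝ) + (n : ℝ) * ν i) *
            ∑ j ∈ Finset.univ.erase i,
              ρ j * (ν j - 1) * ∏ k ∈ (Finset.univ.erase i).erase j, ν k)
      = -(n:ℝ) * ∑ i, ρ i * (ν i - 1) * ∏ j ∈ Finset.univ.erase i, ν j := by
    have hswap : ∑ i, (1 - (n : ℝ) + (n : ℝ) * ν i) *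
            ∑ j ∈ Finset.univ.erase i,
              ρ j * (ν j - 1) * ∏ k ∈ (Finset.univ.erase i).erase j, ν k
        = ∑ j, ρ j * (ν j - 1) *
            ((1 - (n:ℝ)) * (∑ i ∈ Finset.univ.erase j, ∏ k ∈ (Finset.univ.erase j).erase i, ν k)
              + (n:ℝ) * ((n:ℝ) - 1) * ∏ k ∈ Finset.univ.erase j, ν k) := by
      have e1 : ∀ i : Fin n, (1 - (n : ℝ) + (n : ℝ) * ν i) *
            ∑ j ∈ Finset.univ.erase i,
              ρ j * (ν j - 1) * ∏ k ∈ (Finset.univ.erase i).erase j, ν k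
          = ∑ j ∈ Finset.univ.erase i, (1 - (n : ℝ) + (n : ℝ) * ν i) *
              (ρ j * (ν j - 1) * ∏ k ∈ (Finset.univ.erase i).erase j, ν k) :=
        fun i => Finset.mul_sum _ _ _
      rw [Finset.sum_congr rfl fun i _ => e1 i,
        aux_swap (fun i j => (1 - (n : ℝ) + (n : ℝ) * ν i) *
          (ρ j * (ν j - 1) * ∏ k ∈ (Finset.univ.erase i).erase j, ν k))]
      refine Finset.sum_congr rfl fun j _ => ?_
      have e2 : ∀ i ∈ Finset.univ.erase j, (1 - (n : ℝ) + (n : ℝ) * ν i) *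
            (ρ j * (ν j - 1) * ∏ k ∈ (Finset.univ.erase i).erase j, ν k)
          = ρ j * (ν j - 1) * ((1 - (n:ℝ)) * ∏ k ∈ (Finset.univ.erase j).erase i, ν k
              + (n:ℝ) * (ν i * ∏ k ∈ (Finset.univ.erase j).erase i, ν k)) := by
        intro i hi
        rw [Finset.erase_right_comm]; ring
      rw [Finset.sum_congr rfl e2, ← Finset.mul_sum]
      congr 1
      rw [Finset.sum_add_distrib, ← Finset.mul_sum, ← Finset.mul_sum,
        Finset.sum_congr rfl fun i hi => hPmul j i hi,
        Finset.sum_const, nsmul_eq_mul, hcard j]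
      ring
    rw [Finset.sum_sub_distrib, hswap, ← Finset.sum_sub_distrib, Finset.mul_sum]
    refine Finset.sum_congr rfl fun i _ => ?_
    ring
  -- sum of ybar
  have hysum : ∑ i, ybar i = 1 - xbar := by
    rw [Finset.sum_congr rfl fun i _ => hy i, Finset.sum_add_distrib]
    have h1 : ∑ _i : Fin n, 1 / (n:ℝ) = 1 := by
      rw [Finset.sum_const, Finset.card_univ, Fintype.card_fin, nsmul_eq_mul]
      field_simp
    rw [h1, ← Finset.sum_div, hNsum, hx]
    field_simp
    ring
  refine ⟨hDne, ⟨?_, ?_⟩, by linarith⟩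
  · rw [hysum]; ring
  · intro i
    have hErase : ∑ j ∈ Finset.univ.erase i, ybar j = 1 - xbar - ybar i := by
      have h := Finset.add_sum_erase Finset.univ ybar (Finset.mem_univ i)
      rw [hysum] at h
      linarith
    rw [hErase]
    have hAi := hA i
    have hDii := hDi i
    have hyi := hy i
    set Pi := ∏ k ∈ Finset.univ.erase i, ν k with hPidef
    set Si := ∑ j ∈ Finset.univ.erase i, ∏ k ∈ (Finset.univ.erase i).erase j, ν k with hSidef
    set Ti := ∑ j ∈ Finset.univ.erase i,
        ρ j * (ν j - 1) * ∏ k ∈ (Finset.univ.erase i).erase j, ν k with hTidef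
    have key : (1 - ν i) * (xbar - ρ i)
        + ν i * ((1 / ((n : ℝ) - 1)) * (1 - xbar - ybar i) - ybar i) = 0 := by
      rw [hx, hyi, hAi, hDii]
      have hDne' : (ν i - 1) * Pi + ν i * (((n:ℝ) - 1) * Pi - Si) ≠ 0 := by
        rw [← hDii]; exact hDne
      have hDne'' : (ν i - 1) * Pi + ν i * (Pi * ((n:ℝ) - 1) - Si) ≠ 0 := by
        convert hDne' using 1; ring
      field_simp
      ring
    rw [key, mul_zero]
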